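/- Let A be a finite alphabet with |A| ≥ 2 and k a positive integer. Every regular code X ⊆ A* that is F̲_k-independent (i.e., there is no pair x, y ∈ X with x ≠ y and d_F(x,y) ≤ k) can be embedded into a complete code Z ⊇ X that is still F̲_k-independent (and may be taken regular). -/

import Mathlib

open scoped ENNReal

/-- Length of a longest common prefix of `w` and `w'`. -/
noncomputable def lcpLen {A : Type*} (w w' : List A) : ℕ :=
  sSup {n | ∃ p : List A, p.length = n ∧ p <+: w ∧ p <+: w'}

/-- The prefix distance `d_P(w,w') = |w| + |w'| - 2|w ∧ w'|`. -/
noncomputable def dP {A : Type*} (w w' : List A) : ℕ :=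
  w.length + w'.length - 2 * lcpLen w w'

/-- Length of a longest common suffix of `w` and `w'`. -/
noncomputable def lcsLen {A : Type*} (w w' : List A) : ℕ :=
  sSup {n | ∃ s : List A, s.length = n ∧ s <:+ w ∧ s <:+ w'}

/-- The suffix distance `d_S(w,w') = |w| + |w'| - 2|s|`. -/
noncomputable def dS {A : Type*} (w w' : List A) : ℕ :=
  w.length + w'.length - 2 * lcsLen w w'

/-- Length of a longest common factor of `w` and `w'`. -/
noncomputable def lcfLen {A : Type*} (w w' : List A) : ℕ :=
  sSup {n | ∃ f : List A, f.length = n ∧ f <:+: w ∧ f <:+: w'}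

/-- The factor distance `d_F(w,w') = |w| + |w'| - 2|f|`,
`f` a maximum-length common factor. -/
noncomputable def dF {A : Type*} (w w' : List A) : ℕ :=
  w.length + w'.length - 2 * lcfLen w w'

/-- `n`-fold composition of a binary relation. -/
def relPow {α : Type*} (r : α → α → Prop) : ℕ → α → α → Prop
  | 0 => Eq
  | n + 1 => Relation.Comp (relPow r n) r

/-- `X` is a (variable-length) code: every word of `X*` factorizes uniquely over `X`. -/
def IsCode {A : Type*} (X : Set (List A)) : Prop :=
  ∀ l m : List (List A), (∀ x ∈ l, x ∈ X) → (∀ x ∈ m, x ∈ X) →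
    l.flatten = m.flatten → l = m

/-- `X` is complete: every word is a factor of some word of `X*`. -/
def IsCompleteSet {A : Type*} (X : Set (List A)) : Prop :=
  ∀ w : List A, ∃ l : List (List A), (∀ x ∈ l, x ∈ X) ∧ w <:+: l.flatten

/-- `X ⊆ A*` is a regular language: accepted by a finite deterministic automaton. -/
def IsRegularLang {A : Type*} (X : Set (List A)) : Prop :=
  ∃ (Q : Type) (_ : Fintype Q) (M : DFA A Q), M.accepts = X

/-- The uniform Bernoulli measure `μ(X) = Σ_{x ∈ X} |A|^{-|x|}`. -/
noncomputable def mu (A : Type*) [Fintype A] (X : Set (List A)) : ℝ≥0∞ :=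
  ∑' x : X, ((Fintype.card A : ℝ≥0∞))⁻¹ ^ (x : List A).length


namespace Stmt15

variable {A : Type*}

/-! ### Basic facts about `lcfLen` and `dF` -/

lemma lcf_set_nonempty (w w' : List A) :
    {n | ∃ f : List A, f.length = n ∧ f <:+: w ∧ f <:+: w'}.Nonempty :=
  ⟨0, [], rfl, List.nil_infix, List.nil_infix⟩

lemma lcf_set_bdd (w w' : List A) :
    BddAbove {n | ∃ f : List A, f.length = n ∧ f <:+: w ∧ f <:+: w'} := by
  refine ⟨w.length, fun n hn => ?_⟩
  obtain ⟨f, hf, h1, _⟩ := hn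
  exact hf ▸ h1.length_le

lemma exists_max_common_factor (w w' : List A) :
    ∃ f : List A, f.length = lcfLen w w' ∧ f <:+: w ∧ f <:+: w' :=
  Nat.sSup_mem (lcf_set_nonempty w w') (lcf_set_bdd w w')

lemma le_lcfLen {w w' f : List A} (h1 : f <:+: w) (h2 : f <:+: w') :
    f.length ≤ lcfLen w w' :=
  le_csSup (lcf_set_bdd w w') ⟨f, rfl, h1, h2⟩

lemma lcfLen_comm (w w' : List A) : lcfLen w w' = lcfLen w' w := by
  unfold lcfLen
  congr 1
  ext n
  exact ⟨fun ⟨f, h, h1, h2⟩ => ⟨f, h, h2, h1⟩, fun ⟨f, h, h1, h2⟩ => ⟨f, h, h2, h1⟩⟩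

lemma dF_comm (w w' : List A) : dF w w' = dF w' w := by
  unfold dF
  rw [lcfLen_comm, Nat.add_comm]

/-- From `dF w w' ≤ k`, extract a common factor with small total margins. -/
lemma dF_le_margins {w w' : List A} {k : ℕ} (h : dF w w' ≤ k) :
    ∃ f s t s' t' : List A, w = s ++ f ++ t ∧ w' = s' ++ f ++ t' ∧
      s.length + t.length + (s'.length + t'.length) ≤ k := by
  obtain ⟨f, hlen, h1, h2⟩ := exists_max_common_factor w w'
  obtain ⟨s, t, hst⟩ := h1
  obtain ⟨s', t', hst'⟩ := h2
  refine ⟨f, s, t, s', t', hst.symm, hst'.symm, ?_⟩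
  have hw : w.length = s.length + f.length + t.length := by
    rw [← hst]; simp [List.length_append]; omega
  have hw' : w'.length = s'.length + f.length + t'.length := by
    rw [← hst']; simp [List.length_append]; omega
  have hd : dF w w' = w.length + w'.length - 2 * f.length := by
    rw [dF, hlen]
  omega

/-- getElem in the middle part of a decomposition. -/
lemma getElem_middle {s f t : List A} {x : ℕ} (hx : x < f.length)
    (h : s.length + x < (s ++ f ++ t).length) :
    (s ++ f ++ t)[s.length + x] = f[x] := by
  calc (s ++ f ++ t)[s.length + x]
      = (s ++ f)[s.length + x]'(by simp [List.length_append]; omega) :=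
        List.getElem_append_left (by simp [List.length_append]; omega)
    _ = f[s.length + x - s.length]'(by omega) := List.getElem_append_right (by omega)
    _ = f[x] := by congr 1; omega

/-- getElem through a prefix decomposition. -/
lemma getElem_front {y ρ : List A} {x : ℕ} (hx : x < y.length)
    (h : x < (y ++ ρ).length) :
    (y ++ ρ)[x] = y[x] :=
  List.getElem_append_left hx

/-- getElem through a suffix decomposition `z = c ++ y`. -/
lemma getElem_back {c y : List A} {x : ℕ} (hx : c.length ≤ x)
    (hx2 : x - c.length < y.length)
    (h : x < (c ++ y).length) :
    (c ++ y)[x] = y[x - c.length] :=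
  List.getElem_append_right hx

/-- If a window of `z` lies inside the window of `f`, then `w` is an infix of `f`. -/
lemma infix_of_window {z s f t p w q : List A}
    (h1 : z = s ++ f ++ t) (h2 : z = p ++ w ++ q)
    (h3 : s.length ≤ p.length) (h4 : p.length + w.length ≤ s.length + f.length) :
    w <:+: f := by
  have hw : (z.drop p.length).take w.length = w := by
    rw [h2, List.append_assoc, List.drop_left' rfl, List.take_left' rfl]
  have hf : (z.drop s.length).take f.length = f := by
    rw [h1, List.append_assoc, List.drop_left' rfl, List.take_left' rfl]
  have hmin : w.length ⊓ (f.length - (p.length - s.length)) = w.length :=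
    min_eq_left (by omega)
  have key : (f.drop (p.length - s.length)).take w.length = w := by
    rw [← hf, List.drop_take, List.drop_drop]
    have e1 : s.length + (p.length - s.length) = p.length := by omega
    rw [e1, List.take_take, hmin, hw]
  exact key ▸ (((f.drop _).take_prefix _).isInfix.trans (f.drop_suffix _).isInfix)

/-! ### Unbordered words -/

/-- `y` is unbordered. -/
def Unbordered (y : List A) : Prop :=
  ∀ t : List A, t <+: y → t <:+ y → t ≠ [] → t = y

/-- Two occurrences of an unbordered word cannot properly overlap. -/
lemma no_overlap {y : List A} (hy : Unbordered y) {w s₁ t₁ s₂ t₂ : List A}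
    (h1 : w = s₁ ++ y ++ t₁) (h2 : w = s₂ ++ y ++ t₂)
    (l1 : s₁.length < s₂.length) (l2 : s₂.length < s₁.length + y.length) : False := by
  have hδ2 : s₂.length - s₁.length < y.length := by omega
  have hs2 : s₂ = s₁ ++ y.take (s₂.length - s₁.length) := by
    have e1 : w.take s₂.length = s₂ := by
      rw [h2, List.append_assoc]
      exact List.take_left' rfl
    have e2 : w.take s₂.length = s₁ ++ y.take (s₂.length - s₁.length) := by
      rw [h1, List.append_assoc, List.take_append,
        List.take_of_length_le (le_of_lt l1), List.take_append]
      have h5 : s₂.length - s₁.length - y.length = 0 := by omega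
      rw [h5, List.take_zero, List.append_nil]
    exact (e2.symm.trans e1).symm
  have hcanc : y ++ t₁ = y.take (s₂.length - s₁.length) ++ (y ++ t₂) := by
    have h3 : s₁ ++ (y ++ t₁) = s₁ ++ (y.take (s₂.length - s₁.length) ++ (y ++ t₂)) := by
      have := h1.symm.trans h2
      rw [hs2] at this
      simpa [List.append_assoc] using this
    exact List.append_cancel_left h3
  have hlt : (y.take (s₂.length - s₁.length)).length = s₂.length - s₁.length := by
    simp only [List.length_take]; omega
  have htake : y = y.take (s₂.length - s₁.length) ++ y.take (y.length - (s₂.length - s₁.length)) := by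
    have e1 : (y ++ t₁).take y.length = y := List.take_left
    have e2 : (y.take (s₂.length - s₁.length) ++ (y ++ t₂)).take y.length
        = y.take (s₂.length - s₁.length) ++ y.take (y.length - (s₂.length - s₁.length)) := by
      rw [List.take_append, List.take_of_length_le (by rw [hlt]; omega), hlt,
        List.take_append]
      have h5 : y.length - (s₂.length - s₁.length) - y.length = 0 := by omega
      rw [h5, List.take_zero, List.append_nil]
    rw [hcanc] at e1
    exact (e2.symm.trans e1).symm
  have hblen : (y.take (y.length - (s₂.length - s₁.length))).length
      = y.length - (s₂.length - s₁.length) := by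
    simp only [List.length_take]; omega
  have hb : y.take (y.length - (s₂.length - s₁.length)) = y := by
    refine hy _ (List.take_prefix _ _) ⟨y.take (s₂.length - s₁.length), htake.symm⟩ ?_
    intro hnil
    rw [hnil] at hblen
    simp at hblen
    omega
  rw [hb] at hblen
  omega

end Stmt15

namespace Stmt15

variable {A : Type*}

/-! ### The completion construction -/

/-- Words of `X*`. -/
def KS (X : Set (List A)) : Set (List A) :=
  {w | ∃ l : List (List A), (∀ v ∈ l, v ∈ X) ∧ l.flatten = w}

/-- Contents of the added code words. -/
def Ucon (X : Set (List A)) (y : List A) : Set (List A) :=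
  {u | u ≠ [] ∧ ¬ y <:+: u ∧ u ∉ KS X}

/-- Skeleton words `y u₁ y u₂ y ⋯ uᵣ y`. -/
def mkY (y : List A) (us : List (List A)) : List A := y ++ (us.map (· ++ y)).flatten

/-- The added set of code words. -/
def Ys (X : Set (List A)) (y : List A) : Set (List A) :=
  {z | ∃ us : List (List A), (∀ u ∈ us, u ∈ Ucon X y) ∧ z = mkY y us}

/-- The completed code. -/
def Zc (X : Set (List A)) (y : List A) : Set (List A) := X ∪ Ys X y

variable {X : Set (List A)} {y : List A}

lemma mkY_nil : mkY y ([] : List (List A)) = y := by simp [mkY]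

lemma mkY_cons (u : List A) (us : List (List A)) :
    mkY y (u :: us) = y ++ u ++ mkY y us := by
  simp [mkY, List.append_assoc]

lemma y_mem_Ys : y ∈ Ys X y := ⟨[], by simp, mkY_nil.symm⟩

lemma cons_mem_Ys {u z : List A} (hu : u ∈ Ucon X y) (hz : z ∈ Ys X y) :
    y ++ u ++ z ∈ Ys X y := by
  obtain ⟨us, h1, rfl⟩ := hz
  refine ⟨u :: us, ?_, (mkY_cons u us).symm⟩
  intro v hv
  rcases List.mem_cons.1 hv with h | h
  · exact h ▸ hu
  · exact h1 v h

lemma Ys_startsWith {z : List A} (hz : z ∈ Ys X y) : ∃ ρ, z = y ++ ρ := by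
  obtain ⟨us, _, rfl⟩ := hz
  exact ⟨_, rfl⟩

lemma Ys_endsWith {z : List A} (hz : z ∈ Ys X y) : ∃ c, z = c ++ y := by
  obtain ⟨us, hus, rfl⟩ := hz
  clear hus
  induction us with
  | nil => exact ⟨[], by simp [mkY_nil]⟩
  | cons u t ih =>
      obtain ⟨c, hc⟩ := ih
      exact ⟨y ++ u ++ c, by rw [mkY_cons, hc]; simp [List.append_assoc]⟩

lemma Ys_len {z : List A} (hz : z ∈ Ys X y) : y.length ≤ z.length := by
  obtain ⟨ρ, rfl⟩ := Ys_startsWith hz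
  simp

lemma mem_KS_of_memX {x : List A} (hx : x ∈ X) : x ∈ KS X :=
  ⟨[x], by simp [hx], by simp⟩

lemma flatten_mem_KS {l : List (List A)} (h : ∀ v ∈ l, v ∈ X) : l.flatten ∈ KS X :=
  ⟨l, h, rfl⟩

lemma nil_mem_KS : ([] : List A) ∈ KS X := ⟨[], by simp, by simp⟩

/-- The first occurrence of `y` after a `y`-free word is unambiguous. -/
lemma firstY (hy : Unbordered y) {u v u' v' : List A}
    (h : u ++ v = u' ++ v') (hu : ¬ y <:+: u) (hu' : ¬ y <:+: u')
    (hv : y <+: v) (hv' : y <+: v') : u = u' ∧ v = v' := by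
  have haux : ∀ (u v u' v' : List A), u ++ v = u' ++ v' → ¬ y <:+: u' →
      y <+: v → y <+: v' → u.length < u'.length → False := by
    intro u v u' v' h hu' hv hv' hlt
    obtain ⟨r, hr⟩ := hv
    obtain ⟨r', hr'⟩ := hv'
    have h1 : u ++ v = u ++ y ++ r := by rw [List.append_assoc, hr]
    have h2 : u ++ v = u' ++ y ++ r' := by rw [h, List.append_assoc, hr']
    by_cases hole : u'.length < u.length + y.length
    · exact no_overlap hy h1 h2 hlt hole
    · apply hu'
      have e1 : (u' ++ v').take u'.length = u' := List.take_left' rfl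
      have e2 : (u' ++ v').take u'.length
          = u ++ y ++ (r.take (u'.length - (u.length + y.length))) := by
        rw [← h, h1, List.take_append,
          List.take_of_length_le (by simp [List.length_append]; omega)]
        simp [List.length_append, List.append_assoc]
      exact ⟨u, r.take (u'.length - (u.length + y.length)), (e2.symm.trans e1)⟩
  rcases Nat.lt_trichotomy u.length u'.length with hlt | heq | hgt
  · exact absurd (haux u v u' v' h hu' hv hv' hlt) (by simp)
  · have hu2 : u = u' := by
      have e1 : (u ++ v).take u.length = u := List.take_left' rfl
      have e2 : (u' ++ v').take u'.length = u' := List.take_left' rfl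
      rw [← e1, ← e2, h, heq]
    refine ⟨hu2, ?_⟩
    rw [hu2] at h
    exact List.append_cancel_left h
  · exact absurd (haux u' v' u v h.symm hu hv' hv hgt) (by simp)

section Decoding

variable (hy : Unbordered y) (hXy : ∀ w ∈ KS X, ¬ y <:+: w)

include hy hXy

/-- Extract the initial `X`-run from a list of code words. -/
lemma run_extract : ∀ l : List (List A), (∀ w ∈ l, w ∈ Zc X y) →
    ∃ xs rest, l = xs ++ rest ∧ (∀ w ∈ xs, w ∈ X) ∧
      (rest = [] ∨ ∃ z rest', rest = z :: rest' ∧ z ∈ Ys X y ∧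
        (∀ w ∈ rest', w ∈ Zc X y)) := by
  intro l hl
  induction l with
  | nil => exact ⟨[], [], rfl, by simp, Or.inl rfl⟩
  | cons w l ih =>
    rcases hl w (by simp) with hw | hw
    · obtain ⟨xs, rest, he, hxs, hr⟩ := ih (fun v hv => hl v (by simp [hv]))
      refine ⟨w :: xs, rest, by simp [he], ?_, hr⟩
      intro v hv
      rcases List.mem_cons.1 hv with h | h
      · exact h ▸ hw
      · exact hxs v h
    · exact ⟨[], w :: l, rfl, by simp,
        Or.inr ⟨w, l, rfl, hw, fun v hv => hl v (by simp [hv])⟩⟩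

/-- A `Ucon`-content can never be parsed as an `X`-run. -/
lemma no_content_as_run {rest : List (List A)} (hrest : ∀ w ∈ rest, w ∈ Zc X y)
    {u' tail : List A} (hu' : u' ∈ Ucon X y) (htail : y <+: tail)
    (heq : rest.flatten = u' ++ tail) : False := by
  obtain ⟨xs, rrest, he, hxs, hr⟩ := run_extract hy hXy rest hrest
  rcases hr with hnil | ⟨z, rest₂, he2, hz, _⟩
  · subst hnil
    rw [List.append_nil] at he
    subst he
    apply hXy _ (flatten_mem_KS hxs)
    obtain ⟨r, hr⟩ := htail
    exact ⟨u', r, by rw [List.append_assoc, hr, heq]⟩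
  · subst he2
    have hflat : rest.flatten = xs.flatten ++ (z ++ rest₂.flatten) := by
      rw [he]; simp
    obtain ⟨ρ, hρ⟩ := Ys_startsWith hz
    have h2 : u' ++ tail = xs.flatten ++ (z ++ rest₂.flatten) := by rw [← heq, hflat]
    have := firstY hy h2 hu'.2.1 (hXy _ (flatten_mem_KS hxs)) htail
      ⟨ρ ++ rest₂.flatten, by rw [hρ, List.append_assoc]⟩
    exact hu'.2.2 (this.1 ▸ flatten_mem_KS hxs)

/-- Chains of skeleton words with valid continuations decode uniquely. -/
lemma chainY : ∀ us us' rest rest' : List (List A),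
    (∀ u ∈ us, u ∈ Ucon X y) → (∀ u ∈ us', u ∈ Ucon X y) →
    (∀ w ∈ rest, w ∈ Zc X y) → (∀ w ∈ rest', w ∈ Zc X y) →
    mkY y us ++ rest.flatten = mkY y us' ++ rest'.flatten →
    us = us' ∧ rest.flatten = rest'.flatten := by
  intro us
  induction us with
  | nil =>
    intro us' rest rest' _ hus' hrest hrest' heq
    cases us' with
    | nil =>
      refine ⟨rfl, ?_⟩
      rw [mkY_nil] at heq
      exact List.append_cancel_left heq
    | cons u' t' =>
      exfalso
      rw [mkY_nil, mkY_cons] at heq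
      have heq2 : rest.flatten = u' ++ (mkY y t' ++ rest'.flatten) := by
        apply List.append_cancel_left (as := y)
        rw [heq]
        simp [List.append_assoc]
      exact no_content_as_run hy hXy hrest (hus' u' (by simp))
        ⟨(t'.map (· ++ y)).flatten ++ rest'.flatten, by simp [mkY, List.append_assoc]⟩ heq2
  | cons u t ih =>
    intro us' rest rest' hus hus' hrest hrest' heq
    cases us' with
    | nil =>
      exfalso
      rw [mkY_nil, mkY_cons] at heq
      have heq2 : rest'.flatten = u ++ (mkY y t ++ rest.flatten) := by
        apply List.append_cancel_left (as := y)
        rw [← heq]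
        simp [List.append_assoc]
      exact no_content_as_run hy hXy hrest' (hus u (by simp))
        ⟨(t.map (· ++ y)).flatten ++ rest.flatten, by simp [mkY, List.append_assoc]⟩ heq2
    | cons u' t' =>
      rw [mkY_cons, mkY_cons] at heq
      have heq2 : u ++ (mkY y t ++ rest.flatten) = u' ++ (mkY y t' ++ rest'.flatten) := by
        apply List.append_cancel_left (as := y)
        rw [← List.append_assoc, ← List.append_assoc, ← List.append_assoc, ← List.append_assoc]
        simpa [List.append_assoc] using heq
      obtain ⟨h1, h2⟩ := firstY hy heq2 (hus u (by simp)).2.1 (hus' u' (by simp)).2.1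
        ⟨(t.map (· ++ y)).flatten ++ rest.flatten, by simp [mkY, List.append_assoc]⟩
        ⟨(t'.map (· ++ y)).flatten ++ rest'.flatten, by simp [mkY, List.append_assoc]⟩
      obtain ⟨h3, h4⟩ := ih t' rest rest' (fun v hv => hus v (by simp [hv]))
        (fun v hv => hus' v (by simp [hv])) hrest hrest' h2
      exact ⟨by rw [h1, h3], h4⟩

end Decoding

end Stmt15

namespace Stmt15

variable {A : Type*} {X : Set (List A)} {y : List A}

lemma nil_not_mem_of_code (hcode : IsCode X) : ([] : List A) ∉ X := by
  intro h
  have := hcode [[]] [] (by simp [h]) (by simp) (by simp)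
  simp at this

lemma eq_nil_of_flatten_nil (hyn : y ≠ []) (hnil : ([] : List A) ∉ X) :
    ∀ m : List (List A), (∀ w ∈ m, w ∈ Zc X y) → m.flatten = [] → m = [] := by
  intro m hm hflat
  cases m with
  | nil => rfl
  | cons w t =>
    exfalso
    rw [List.flatten_cons, List.append_eq_nil_iff] at hflat
    rcases hm w (by simp) with hw | hw
    · exact hnil (hflat.1 ▸ hw)
    · obtain ⟨ρ, hρ⟩ := Ys_startsWith hw
      rw [hflat.1] at hρ
      exact hyn (List.append_eq_nil_iff.1 hρ.symm).1

/-- `Z = X ∪ Y` is a code. -/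
theorem code_Zc (hy : Unbordered y) (hyn : y ≠ [])
    (hXy : ∀ w ∈ KS X, ¬ y <:+: w) (hcode : IsCode X) : IsCode (Zc X y) := by
  have hnil : ([] : List A) ∉ X := nil_not_mem_of_code hcode
  have key : ∀ n (l m : List (List A)), l.length ≤ n →
      (∀ w ∈ l, w ∈ Zc X y) → (∀ w ∈ m, w ∈ Zc X y) → l.flatten = m.flatten → l = m := by
    intro n
    induction n with
    | zero =>
      intro l m hlen hl hm heq
      have hl0 : l = [] := List.length_eq_zero_iff.mp (by omega)
      subst hl0
      exact (eq_nil_of_flatten_nil hyn hnil m hm heq.symm).symm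
    | succ n ih =>
      intro l m hlen hl hm heq
      obtain ⟨xs, rest, rfl, hxs, hr⟩ := run_extract hy hXy l hl
      obtain ⟨xs', rest', rfl, hxs', hr'⟩ := run_extract hy hXy m hm
      rcases hr with hrnil | ⟨z, r2, hrz, hz, hr2⟩ <;>
        rcases hr' with hrnil' | ⟨z', r2', hrz', hz', hr2'⟩
      · subst hrnil; subst hrnil'
        simp only [List.append_nil, List.flatten_append, List.flatten_nil] at heq ⊢
        exact hcode xs xs' hxs hxs' (by simpa using heq)
      · exfalso
        subst hrnil; subst hrz'
        rw [List.append_nil] at heq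
        apply hXy _ (flatten_mem_KS hxs)
        obtain ⟨ρ, hρ⟩ := Ys_startsWith hz'
        refine ⟨xs'.flatten, ρ ++ r2'.flatten, ?_⟩
        rw [heq]
        simp [hρ, List.append_assoc]
      · exfalso
        subst hrnil'; subst hrz
        rw [List.append_nil] at heq
        apply hXy _ (flatten_mem_KS hxs')
        obtain ⟨ρ, hρ⟩ := Ys_startsWith hz
        refine ⟨xs.flatten, ρ ++ r2.flatten, ?_⟩
        rw [← heq]
        simp [hρ, List.append_assoc]
      · subst hrz; subst hrz'
        have heq2 : xs.flatten ++ (z ++ r2.flatten) = xs'.flatten ++ (z' ++ r2'.flatten) := by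
          simpa [List.append_assoc] using heq
        obtain ⟨ρ, hρ⟩ := Ys_startsWith hz
        obtain ⟨ρ', hρ'⟩ := Ys_startsWith hz'
        obtain ⟨e1, e2⟩ := firstY hy heq2 (hXy _ (flatten_mem_KS hxs))
          (hXy _ (flatten_mem_KS hxs'))
          ⟨ρ ++ r2.flatten, by rw [hρ, List.append_assoc]⟩
          ⟨ρ' ++ r2'.flatten, by rw [hρ', List.append_assoc]⟩
        have hxx : xs = xs' := hcode xs xs' hxs hxs' e1
        obtain ⟨us, hus, rfl⟩ := hz
        obtain ⟨us', hus', rfl⟩ := hz'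
        obtain ⟨e3, e4⟩ := chainY hy hXy us us' r2 r2' hus hus' hr2 hr2' e2
        have hlen2 : r2.length ≤ n := by
          rw [List.length_append, List.length_cons] at hlen
          omega
        have e5 : r2 = r2' := ih r2 r2' hlen2 hr2 hr2' e4
        rw [hxx, e3, e5]
  intro l m hl hm heq
  exact key l.length l m le_rfl hl hm heq

/-- Covering lemma: every word appears (after the marker) inside a word of `Z*`. -/
lemma cover (hyn : y ≠ []) : ∀ n (w : List A), w.length ≤ n →
    ∃ (z : List A) (rest : List (List A)) (t : List A), z ∈ Ys X y ∧
      (∀ v ∈ rest, v ∈ Zc X y) ∧ z ++ rest.flatten = y ++ w ++ t := by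
  have hcase : ∀ (w : List A), ¬ y <:+: w →
      ∃ (z : List A) (rest : List (List A)) (t : List A), z ∈ Ys X y ∧
        (∀ v ∈ rest, v ∈ Zc X y) ∧ z ++ rest.flatten = y ++ w ++ t := by
    intro w hfree
    by_cases hKS : w ∈ KS X
    · obtain ⟨xs, hxs, hflat⟩ := hKS
      refine ⟨y, xs ++ [y], y, y_mem_Ys, ?_, ?_⟩
      · intro v hv
        rcases List.mem_append.1 hv with h | h
        · exact Or.inl (hxs v h)
        · simp at h
          exact h ▸ Or.inr y_mem_Ys
      · rw [List.flatten_append]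
        simp [hflat, List.append_assoc]
    · have hU : w ∈ Ucon X y := ⟨fun h => hKS (h ▸ nil_mem_KS), hfree, hKS⟩
      exact ⟨y ++ w ++ y, [], y, cons_mem_Ys hU y_mem_Ys, by simp,
        by simp [List.append_assoc]⟩
  intro n
  induction n with
  | zero =>
    intro w hw
    have hw0 : w = [] := List.length_eq_zero_iff.mp (by omega)
    subst hw0
    exact hcase [] (by intro h; exact (List.eq_nil_of_infix_nil h ▸ hyn) rfl)
  | succ n ih =>
    intro w hw
    by_cases hfree : y <:+: w
    · have hS : {m | ∃ g r : List A, g.length = m ∧ w = g ++ y ++ r}.Nonempty := by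
        obtain ⟨s, t', hst⟩ := hfree
        exact ⟨s.length, s, t', rfl, hst.symm⟩
      obtain ⟨g, r, hglen, hgr⟩ := Nat.sInf_mem hS
      have hyl : 0 < y.length := List.length_pos_iff.2 hyn
      have hgfree : ¬ y <:+: g := by
        rintro ⟨s, t', hst⟩
        have hmem : s.length ∈ {m | ∃ g r : List A, g.length = m ∧ w = g ++ y ++ r} := by
          refine ⟨s, t' ++ y ++ r, rfl, ?_⟩
          rw [hgr, ← hst]
          simp [List.append_assoc]
        have hle := Nat.sInf_le hmem
        have : g.length = s.length + y.length + t'.length := by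
          rw [← hst]; simp [List.length_append]; omega
        omega
      have hrlen : r.length ≤ n := by
        have : w.length = g.length + y.length + r.length := by
          rw [hgr]; simp [List.length_append]; omega
        omega
      obtain ⟨z, rest, t, hz, hrest, hflat⟩ := ih r hrlen
      by_cases hgKS : g ∈ KS X
      · obtain ⟨xs, hxs, hgflat⟩ := hgKS
        refine ⟨y, xs ++ (z :: rest), t, y_mem_Ys, ?_, ?_⟩
        · intro v hv
          rcases List.mem_append.1 hv with h | h
          · exact Or.inl (hxs v h)
          · rcases List.mem_cons.1 h with h2 | h2
            · exact h2 ▸ Or.inr hz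
            · exact hrest v h2
        · rw [List.flatten_append, List.flatten_cons, hgr]
          rw [← List.append_assoc, hgflat]
          rw [show z ++ rest.flatten = y ++ r ++ t from hflat]
          simp [List.append_assoc]
      · have hU : g ∈ Ucon X y := ⟨fun h => hgKS (h ▸ nil_mem_KS), hgfree, hgKS⟩
        refine ⟨y ++ g ++ z, rest, t, cons_mem_Ys hU hz, hrest, ?_⟩
        rw [hgr, List.append_assoc, List.append_assoc, hflat]
        simp [List.append_assoc]
    · exact hcase w hfree

/-- `Z` is complete. -/
theorem complete_Zc (hyn : y ≠ []) : IsCompleteSet (Zc X y) := by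
  intro w
  obtain ⟨z, rest, t, hz, hrest, hflat⟩ := cover hyn w.length w le_rfl
  refine ⟨z :: rest, ?_, ⟨y, t, ?_⟩⟩
  · intro v hv
    rcases List.mem_cons.1 hv with h | h
    · exact h ▸ Or.inr hz
    · exact hrest v h
  · rw [List.flatten_cons, hflat]

end Stmt15

namespace Stmt15

variable {A : Type*}

/-! ### The marker word -/

/-- The rigid unbordered marker `a^{3N} b^N w₀ b^{3N}`. -/
def mark (a b : A) (w₀ : List A) (N : ℕ) : List A :=
  List.replicate (3*N) a ++ (List.replicate N b ++ (w₀ ++ List.replicate (3*N) b))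

section Mark

variable {a b : A} {w₀ : List A} {N : ℕ}

lemma mark_length : (mark a b w₀ N).length = 7*N + w₀.length := by
  simp [mark, List.length_append, List.length_replicate]; omega

lemma mark_ne (hN : 0 < N) : mark a b w₀ N ≠ [] := by
  intro h
  have := congrArg List.length h
  rw [mark_length] at this
  simp at this
  omega

lemma mark_get_a {x : ℕ} (hx : x < 3*N) (h : x < (mark a b w₀ N).length) :
    (mark a b w₀ N)[x] = a := by
  rw [List.getElem_of_eq (show mark a b w₀ N = List.replicate (3*N) a ++ (List.replicate N b ++ (w₀ ++ List.replicate (3*N) b)) from rfl)]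
  rw [List.getElem_append_left (by rw [List.length_replicate]; omega)]
  exact List.getElem_replicate _

lemma mark_get_b1 {x : ℕ} (h3 : 3*N ≤ x) (h4 : x < 4*N)
    (h : x < (mark a b w₀ N).length) :
    (mark a b w₀ N)[x] = b := by
  rw [List.getElem_of_eq (show mark a b w₀ N = List.replicate (3*N) a ++ (List.replicate N b ++ (w₀ ++ List.replicate (3*N) b)) from rfl)]
  rw [List.getElem_append_right (by rw [List.length_replicate]; omega)]
  rw [List.getElem_append_left (by rw [List.length_replicate, List.length_replicate]; omega)]
  exact List.getElem_replicate _

lemma mark_get_b2 {x : ℕ} (h3 : 4*N + w₀.length ≤ x) (h : x < (mark a b w₀ N).length) :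
    (mark a b w₀ N)[x] = b := by
  have h' := h
  rw [mark_length] at h'
  rw [List.getElem_of_eq (show mark a b w₀ N = List.replicate (3*N) a ++ (List.replicate N b ++ (w₀ ++ List.replicate (3*N) b)) from rfl)]
  rw [List.getElem_append_right (by simp [List.length_replicate]; omega)]
  rw [List.getElem_append_right (by simp [List.length_replicate]; omega)]
  rw [List.getElem_append_right (by simp [List.length_replicate]; omega)]
  exact List.getElem_replicate _

/-- The marker viewed with the `w₀`-window exposed. -/
lemma mark_eq_window :
    mark a b w₀ N = (List.replicate (3*N) a ++ List.replicate N b) ++ w₀ ++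
      List.replicate (3*N) b := by
  simp [mark, List.append_assoc]

lemma w0_infix_mark : w₀ <:+: mark a b w₀ N :=
  ⟨List.replicate (3*N) a ++ List.replicate N b, List.replicate (3*N) b,
    by rw [← mark_eq_window]⟩

lemma unbordered_mark (hab : a ≠ b) (hw : w₀.length < N) (hN : 0 < N) :
    Unbordered (mark a b w₀ N) := by
  intro t hpre hsuf htne
  by_cases hlen : t.length = (mark a b w₀ N).length
  · exact hpre.eq_of_length hlen
  exfalso
  have hml : (mark a b w₀ N).length = 7*N + w₀.length := mark_length
  have htlt : t.length < (mark a b w₀ N).length := lt_of_le_of_ne hpre.length_le hlen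
  obtain ⟨s, hs⟩ := hsuf
  have hd : s.length + t.length = (mark a b w₀ N).length := by
    rw [← hs]; simp [List.length_append]
  have htpos : 0 < t.length := List.length_pos_iff.2 htne
  have hd1 : 1 ≤ s.length := by omega
  have hper : ∀ x, x < t.length →
      ∀ (h1 : s.length + x < (mark a b w₀ N).length) (h2 : x < (mark a b w₀ N).length),
      (mark a b w₀ N)[s.length + x] = (mark a b w₀ N)[x] := by
    intro x hx h1 h2
    have e1 : (mark a b w₀ N)[s.length + x] = t[x] := by
      rw [List.getElem_of_eq hs.symm h1]
      rw [List.getElem_append_right (by omega)]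
      congr 1
      omega
    have e2 : t[x]'hx = (mark a b w₀ N)[x] := by
      have ht : t = (mark a b w₀ N).take t.length := List.prefix_iff_eq_take.1 hpre
      rw [List.getElem_of_eq ht hx]
      exact List.getElem_take
    rw [e1, e2]
  set d := s.length with hdd
  -- three cases according to the position of d
  have hww : w₀.length < N := hw
  rcases le_or_gt d (3*N) with hc1 | hc1
  · -- x := 3N - d
    have hx : 3*N - d < t.length := by omega
    have this1 := hper (3*N - d) hx (by omega) (by omega)
    have h1 := mark_get_b1 (a := a) (b := b) (w₀ := w₀) (N := N) (x := d + (3*N - d)) (by omega) (by omega) (by omega)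
    have h2 := mark_get_a (a := a) (b := b) (w₀ := w₀) (N := N) (x := 3*N - d) (by omega) (by omega)
    exact hab ((h1.symm.trans this1).trans h2).symm
  · rcases le_or_gt d (4*N + w₀.length) with hc2 | hc2
    · -- x := 4N + |w₀| - d
      have hx : 4*N + w₀.length - d < t.length := by omega
      have this1 := hper (4*N + w₀.length - d) hx (by omega) (by omega)
      have h1 := mark_get_b2 (a := a) (b := b) (w₀ := w₀) (N := N) (x := d + (4*N + w₀.length - d)) (by omega) (by omega)
      have h2 := mark_get_a (a := a) (b := b) (w₀ := w₀) (N := N) (x := 4*N + w₀.length - d) (by omega) (by omega)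
      exact hab ((h1.symm.trans this1).trans h2).symm
    · -- x := 0
      have this1 := hper 0 (by omega) (by omega) (by omega)
      have h1 := mark_get_b2 (a := a) (b := b) (w₀ := w₀) (N := N) (x := d + 0) (by omega) (by omega)
      have h2 := mark_get_a (a := a) (b := b) (w₀ := w₀) (N := N) (x := 0) (by omega) (by omega)
      exact hab ((h1.symm.trans this1).trans h2).symm

end Mark

end Stmt15

namespace Stmt15

variable {A : Type*}

/-- Index-flexible getElem lemma for middle windows. -/
lemma getElem_middle' {s f t : List A} {i : ℕ} (h1 : s.length ≤ i)
    (h2 : i - s.length < f.length) (h : i < (s ++ f ++ t).length) :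
    (s ++ f ++ t)[i] = f[i - s.length] := by
  calc (s ++ f ++ t)[i]
      = (s ++ f)[i]'(by simp [List.length_append]; omega) :=
        List.getElem_append_left (by simp [List.length_append]; omega)
    _ = f[i - s.length] := List.getElem_append_right h1

lemma getElem_idx {l : List A} {i j : ℕ} (h : i = j) (hi : i < l.length)
    (hj : j < l.length) : l[i] = l[j] := by
  cases h; rfl

section Indep

variable {a b : A} {w₀ : List A} {N k : ℕ} {X : Set (List A)} {y : List A}

set_option maxHeartbeats 1000000 in
/-- σ ≠ 0 case: shifted agreement of two marker-initial words is impossible. -/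
lemma ind_aux1 (hab : a ≠ b) (hk : k < N) (hN : 0 < N)
    (hylen : y.length = 7*N + w₀.length)
    (hya : ∀ x, x < 3*N → ∀ h : x < y.length, y[x] = a)
    (hyb : ∀ x, 3*N ≤ x → x < 4*N → ∀ h : x < y.length, y[x] = b)
    {z z' s f t s' t' ρ ρ' : List A}
    (hz : z = s ++ f ++ t) (hz' : z' = s' ++ f ++ t')
    (hρ : z = y ++ ρ) (hρ' : z' = y ++ ρ')
    (hm : s.length + t.length ≤ k) (hm' : s'.length + t'.length ≤ k)
    (hlt : s.length < s'.length) : False := by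
  have hlz : z.length = s.length + f.length + t.length := by
    rw [hz]; simp [List.length_append]; omega
  have hlz2 : z.length = y.length + ρ.length := by rw [hρ]; simp
  have hlz' : z'.length = s'.length + f.length + t'.length := by
    rw [hz']; simp [List.length_append]; omega
  have hlz2' : z'.length = y.length + ρ'.length := by rw [hρ']; simp
  have hL1 : (s ++ f ++ t).length = s.length + f.length + t.length := by
    simp [List.length_append]; omega
  have hL2 : (s' ++ f ++ t').length = s'.length + f.length + t'.length := by
    simp [List.length_append]; omega
  have hL3 : (y ++ ρ).length = y.length + ρ.length := by simp
  have hL4 : (y ++ ρ').length = y.length + ρ'.length := by simp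
  have h3N : (3*N : ℕ) < z'.length := by omega
  have hxf : 3*N - s'.length < f.length := by omega
  have e1 : z'[3*N] = f[3*N - s'.length]'hxf :=
    (List.getElem_of_eq hz' h3N).trans (getElem_middle' (by omega) hxf (by omega))
  have e2 : z'[3*N] = b :=
    (List.getElem_of_eq hρ' h3N).trans ((getElem_front (by omega) (by omega)).trans
      (hyb (3*N) le_rfl (by omega) (by omega)))
  have hidx : s.length + (3*N - s'.length) < z.length := by omega
  have e3 : z[s.length + (3*N - s'.length)] = f[3*N - s'.length]'hxf :=
    (List.getElem_of_eq hz hidx).trans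
      ((getElem_middle' (by omega) (by omega) (by omega)).trans
        (getElem_idx (by omega) (by omega) hxf))
  have e4 : z[s.length + (3*N - s'.length)] = a :=
    (List.getElem_of_eq hρ hidx).trans ((getElem_front (by omega) (by omega)).trans
      (hya _ (by omega) (by omega)))
  exact hab ((e4.symm.trans e3).trans (e1.symm.trans e2))

set_option maxHeartbeats 1000000 in
/-- σ = 0, different lengths: impossible. -/
lemma ind_aux2 (hab : a ≠ b) (hk : k < N) (hN : 0 < N)
    (hylen : y.length = 7*N + w₀.length)
    (hya : ∀ x, x < 3*N → ∀ h : x < y.length, y[x] = a)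
    (hyb : ∀ x, 3*N ≤ x → x < 4*N → ∀ h : x < y.length, y[x] = b)
    {z z' s f t s' t' c c' : List A}
    (hz : z = s ++ f ++ t) (hz' : z' = s' ++ f ++ t')
    (hc : z = c ++ y) (hc' : z' = c' ++ y)
    (hm : s.length + t.length ≤ k) (hm' : s'.length + t'.length ≤ k)
    (hss : s.length = s'.length) (hzz : z.length < z'.length) : False := by
  have hlz : z.length = s.length + f.length + t.length := by
    rw [hz]; simp [List.length_append]; omega
  have hlz2 : z.length = c.length + y.length := by rw [hc]; simp
  have hlz' : z'.length = s'.length + f.length + t'.length := by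
    rw [hz']; simp [List.length_append]; omega
  have hlz2' : z'.length = c'.length + y.length := by rw [hc']; simp
  have hL1 : (s ++ f ++ t).length = s.length + f.length + t.length := by
    simp [List.length_append]; omega
  have hL2 : (s' ++ f ++ t').length = s'.length + f.length + t'.length := by
    simp [List.length_append]; omega
  have hL3 : (c ++ y).length = c.length + y.length := by simp
  have hL4 : (c' ++ y).length = c'.length + y.length := by simp
  have hp : c.length + 3*N < z.length := by omega
  have hp' : c.length + 3*N < z'.length := by omega
  have hxf : c.length + 3*N - s.length < f.length := by omega
  have e1 : z[c.length + 3*N] = b :=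
    (List.getElem_of_eq hc hp).trans ((getElem_back (by omega) (by omega) (by omega)).trans
      (hyb _ (by omega) (by omega) (by omega)))
  have e2 : z[c.length + 3*N] = f[c.length + 3*N - s.length]'hxf :=
    (List.getElem_of_eq hz hp).trans (getElem_middle' (by omega) hxf (by omega))
  have e3 : z'[c.length + 3*N] = f[c.length + 3*N - s.length]'hxf :=
    (List.getElem_of_eq hz' hp').trans
      ((getElem_middle' (by omega) (by omega) (by omega)).trans
        (getElem_idx (by omega) (by omega) hxf))
  have e4 : z'[c.length + 3*N] = a :=
    (List.getElem_of_eq hc' hp').trans ((getElem_back (by omega) (by omega) (by omega)).trans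
      (hya _ (by omega) (by omega)))
  exact hab ((e4.symm.trans e3).trans (e2.symm.trans e1))

set_option maxHeartbeats 1000000 in
/-- σ = 0, equal lengths: the words are equal. -/
lemma ind_eq (hk : k < N) (hN : 0 < N)
    (hylen : y.length = 7*N + w₀.length)
    {z z' s f t s' t' ρ ρ' c c' : List A}
    (hz : z = s ++ f ++ t) (hz' : z' = s' ++ f ++ t')
    (hρ : z = y ++ ρ) (hρ' : z' = y ++ ρ')
    (hc : z = c ++ y) (hc' : z' = c' ++ y)
    (hm : s.length + t.length ≤ k) (hm' : s'.length + t'.length ≤ k)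
    (hss : s.length = s'.length) (hzz : z.length = z'.length) : z = z' := by
  have hlz : z.length = s.length + f.length + t.length := by
    rw [hz]; simp [List.length_append]; omega
  have hlz2 : z.length = y.length + ρ.length := by rw [hρ]; simp
  have hlz3 : z.length = c.length + y.length := by rw [hc]; simp
  have hlz' : z'.length = s'.length + f.length + t'.length := by
    rw [hz']; simp [List.length_append]; omega
  have hlz2' : z'.length = y.length + ρ'.length := by rw [hρ']; simp
  have hlz3' : z'.length = c'.length + y.length := by rw [hc']; simp
  have hL1 : (s ++ f ++ t).length = s.length + f.length + t.length := by
    simp [List.length_append]; omega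
  have hL2 : (s' ++ f ++ t').length = s'.length + f.length + t'.length := by
    simp [List.length_append]; omega
  have hL3 : (y ++ ρ).length = y.length + ρ.length := by simp
  have hL4 : (y ++ ρ').length = y.length + ρ'.length := by simp
  have hL5 : (c ++ y).length = c.length + y.length := by simp
  have hL6 : (c' ++ y).length = c'.length + y.length := by simp
  refine List.ext_getElem hzz ?_
  intro p hp hp'
  rcases lt_or_ge p s.length with hcase1 | hcase1
  · exact ((List.getElem_of_eq hρ hp).trans (getElem_front (by omega) (by omega))).trans
      (((List.getElem_of_eq hρ' hp').trans (getElem_front (by omega) (by omega)))).symm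
  · rcases lt_or_ge p (s.length + f.length) with hcase2 | hcase2
    · have hxf : p - s.length < f.length := by omega
      exact ((List.getElem_of_eq hz hp).trans
          (getElem_middle' (by omega) hxf (by omega))).trans
        (((List.getElem_of_eq hz' hp').trans
          ((getElem_middle' (by omega) (by omega) (by omega)).trans
            (getElem_idx (by omega) (by omega) hxf)))).symm
    · have hxy : p - c.length < y.length := by omega
      exact ((List.getElem_of_eq hc hp).trans
          (getElem_back (by omega) hxy (by omega))).trans
        (((List.getElem_of_eq hc' hp').trans
          ((getElem_back (by omega) (by omega) (by omega)).trans
            (getElem_idx (by omega) (by omega) hxy)))).symm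

/-- Two distinct words of `Ys` are far apart in factor distance. -/
lemma ind_YY (hab : a ≠ b) (hk : k < N) (hN : 0 < N)
    (hylen : y.length = 7*N + w₀.length)
    (hya : ∀ x, x < 3*N → ∀ h : x < y.length, y[x] = a)
    (hyb : ∀ x, 3*N ≤ x → x < 4*N → ∀ h : x < y.length, y[x] = b)
    {z z' : List A} (hz : z ∈ Ys X y) (hz' : z' ∈ Ys X y) (hne : z ≠ z')
    (hd : dF z z' ≤ k) : False := by
  obtain ⟨f, s, t, s', t', h1, h2, hmm⟩ := dF_le_margins hd
  obtain ⟨ρ, hρ⟩ := Ys_startsWith hz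
  obtain ⟨ρ', hρ'⟩ := Ys_startsWith hz'
  obtain ⟨c, hc⟩ := Ys_endsWith hz
  obtain ⟨c', hc'⟩ := Ys_endsWith hz'
  rcases Nat.lt_trichotomy s.length s'.length with hlt | heq | hgt
  · exact ind_aux1 hab hk hN hylen hya hyb h1 h2 hρ hρ' (by omega) (by omega) hlt
  · rcases Nat.lt_trichotomy z.length z'.length with hzlt | hzeq | hzgt
    · exact ind_aux2 hab hk hN hylen hya hyb h1 h2 hc hc' (by omega) (by omega) heq hzlt
    · exact hne (ind_eq hk hN hylen h1 h2 hρ hρ' hc hc' (by omega) (by omega) heq hzeq)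
    · exact ind_aux2 hab hk hN hylen hya hyb h2 h1 hc' hc (by omega) (by omega) heq.symm hzgt
  · exact ind_aux1 hab hk hN hylen hya hyb h2 h1 hρ' hρ (by omega) (by omega) hgt

/-- A word of `Ys` and a word of `X` are far apart. -/
lemma ind_XY (hk : k < N) (hN : 0 < N)
    (hylen : y.length = 7*N + w₀.length)
    (hwin : ∃ P Q : List A, y = P ++ w₀ ++ Q ∧ P.length = 4*N)
    (hXw₀ : ∀ w ∈ KS X, ¬ w₀ <:+: w)
    {z x : List A} (hz : z ∈ Ys X y) (hx : x ∈ X)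
    (hd : dF z x ≤ k) : False := by
  obtain ⟨f, s, t, s', t', h1, h2, hmm⟩ := dF_le_margins hd
  obtain ⟨ρ, hρ⟩ := Ys_startsWith hz
  obtain ⟨P, Q, hPQ, hPlen⟩ := hwin
  have hzwin : z = P ++ w₀ ++ (Q ++ ρ) := by
    rw [hρ, hPQ]; simp [List.append_assoc]
  have hlz : z.length = s.length + f.length + t.length := by
    rw [h1]; simp [List.length_append]; omega
  have hlz2 : z.length = y.length + ρ.length := by rw [hρ]; simp
  have hinf : w₀ <:+: f := by
    refine infix_of_window h1 hzwin (by omega) ?_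
    have hQ : (P ++ w₀ ++ (Q ++ ρ)).length = P.length + w₀.length + (Q.length + ρ.length) := by
      simp [List.length_append]; omega
    omega
  have hfx : f <:+: x := ⟨s', t', h2.symm⟩
  exact hXw₀ x (mem_KS_of_memX hx) (hinf.trans hfx)

end Indep

end Stmt15

namespace Stmt15

attribute [local instance] Classical.propDecidable

variable {A : Type*}

/-- Concatenation of two set-languages. -/
def catSet (L1 L2 : Set (List A)) : Set (List A) :=
  {w | ∃ u v, u ∈ L1 ∧ v ∈ L2 ∧ u ++ v = w}

/-- Star of a set-language. -/
def starSet (L : Set (List A)) : Set (List A) :=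
  {w | ∃ l : List (List A), (∀ u ∈ l, u ∈ L) ∧ l.flatten = w}

noncomputable section Automata

def prodDFA {Q1 Q2 : Type} (M1 : DFA A Q1) (M2 : DFA A Q2) (acc : Set (Q1 × Q2)) :
    DFA A (Q1 × Q2) where
  step := fun p c => (M1.step p.1 c, M2.step p.2 c)
  start := (M1.start, M2.start)
  accept := acc

lemma prodDFA_eval {Q1 Q2 : Type} (M1 : DFA A Q1) (M2 : DFA A Q2) (acc : Set (Q1 × Q2)) :
    ∀ (x : List A) (p : Q1 × Q2),
      (prodDFA M1 M2 acc).evalFrom p x = (M1.evalFrom p.1 x, M2.evalFrom p.2 x) := by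
  intro x
  induction x with
  | nil => intro p; rfl
  | cons c x ih => intro p; exact ih _

lemma reg_union {L1 L2 : Set (List A)} (h1 : IsRegularLang L1) (h2 : IsRegularLang L2) :
    IsRegularLang (L1 ∪ L2) := by
  obtain ⟨Q1, i1, M1, rfl⟩ := h1
  obtain ⟨Q2, i2, M2, rfl⟩ := h2
  refine ⟨Q1 × Q2, inferInstance,
    prodDFA M1 M2 {p | p.1 ∈ M1.accept ∨ p.2 ∈ M2.accept}, ?_⟩
  ext x
  rw [DFA.mem_accepts]
  show (prodDFA M1 M2 _).evalFrom (M1.start, M2.start) x ∈ _ ↔ _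
  rw [prodDFA_eval]
  rfl

lemma reg_compl {L : Set (List A)} (h : IsRegularLang L) : IsRegularLang Lᶜ := by
  obtain ⟨Q, i, M, rfl⟩ := h
  exact ⟨Q, i, ⟨M.step, M.start, M.acceptᶜ⟩, rfl⟩

def univDFA : DFA A PUnit := ⟨fun _ _ => PUnit.unit, PUnit.unit, Set.univ⟩

lemma reg_univ : IsRegularLang (Set.univ : Set (List A)) :=
  ⟨PUnit, inferInstance, univDFA, by
    ext x
    exact ⟨fun _ => Set.mem_univ x, fun _ => Set.mem_univ _⟩⟩

variable {w : List A}

def wordDFA (w : List A) : DFA A (Option (Fin (w.length + 1))) where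
  step := fun p c =>
    match p with
    | none => none
    | some i =>
      if hlt : (i : ℕ) < w.length then
        (if w[(i : ℕ)] = c then some ⟨(i : ℕ) + 1, Nat.succ_lt_succ hlt⟩ else none)
      else none
  start := some ⟨0, Nat.succ_pos _⟩
  accept := {some ⟨w.length, Nat.lt_succ_self _⟩}

lemma prefix_append_singleton {u : List A} {c : A} :
    u ++ [c] <+: w ↔ u <+: w ∧ ∃ h : u.length < w.length, w[u.length] = c := by
  constructor
  · rintro ⟨t, ht⟩
    have hu : u <+: w := ⟨[c] ++ t, by rw [← ht]; simp [List.append_assoc]⟩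
    have hlen : u.length < w.length := by
      have := congrArg List.length ht
      simp [List.length_append] at this
      omega
    refine ⟨hu, hlen, ?_⟩
    rw [List.getElem_of_eq ht.symm hlen]
    rw [List.getElem_append_left (by simp [List.length_append])]
    exact List.getElem_concat_length rfl _
  · rintro ⟨⟨t, ht⟩, hlen, hc⟩
    refine ⟨w.drop (u.length + 1), ?_⟩
    have hdrop : w.drop u.length = c :: w.drop (u.length + 1) := by
      rw [List.drop_eq_getElem_cons hlen, hc]
    calc u ++ [c] ++ w.drop (u.length + 1) = u ++ (c :: w.drop (u.length + 1)) := by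
          simp [List.append_assoc]
      _ = u ++ w.drop u.length := by rw [hdrop]
      _ = w := by
          conv_rhs => rw [← ht]
          rw [← ht, List.drop_left' rfl]

lemma wordDFA_eval (u : List A) :
    (∀ hp : u <+: w, (wordDFA w).eval u = some ⟨u.length, Nat.lt_succ_of_le hp.length_le⟩) ∧
    (¬ u <+: w → (wordDFA w).eval u = none) := by
  induction u using List.reverseRecOn with
  | nil =>
    constructor
    · intro hp; rfl
    · intro h; exact absurd List.nil_prefix h
  | append_singleton u c ih =>
    constructor
    · intro hp
      have h2 := prefix_append_singleton.1 hp
      obtain ⟨hlen, hc⟩ := h2.2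
      rw [DFA.eval_append_singleton, ih.1 h2.1]
      simp only [wordDFA]
      rw [dif_pos hlen, if_pos hc]
      simp [List.length_append]
    · intro hnp
      by_cases hu : u <+: w
      · rw [DFA.eval_append_singleton, ih.1 hu]
        simp only [wordDFA]
        by_cases hlen : u.length < w.length
        · rw [dif_pos hlen]
          rw [if_neg]
          intro hc
          exact hnp (prefix_append_singleton.2 ⟨hu, hlen, hc⟩)
        · rw [dif_neg hlen]
      · rw [DFA.eval_append_singleton, ih.2 hu]
        rfl

lemma wordDFA_accepts : (wordDFA w).accepts = {w} := by
  ext x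
  rw [DFA.mem_accepts]
  constructor
  · intro hx
    by_cases hp : x <+: w
    · rw [(wordDFA_eval x).1 hp] at hx
      simp only [wordDFA, Set.mem_singleton_iff, Option.some.injEq, Fin.mk.injEq] at hx
      exact hp.eq_of_length hx
    · rw [(wordDFA_eval x).2 hp] at hx
      simp [wordDFA] at hx
  · intro hx
    replace hx : x = w := hx
    subst hx
    rw [(wordDFA_eval x).1 (List.prefix_refl x)]
    rfl

lemma reg_single (w : List A) : IsRegularLang ({w} : Set (List A)) :=
  ⟨Option (Fin (w.length + 1)), inferInstance, wordDFA w, wordDFA_accepts⟩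

lemma nfa_evalFrom_append {σ : Type} (M : NFA A σ) (S : Set σ) (x y' : List A) :
    M.evalFrom S (x ++ y') = M.evalFrom (M.evalFrom S x) y' :=
  List.foldl_append

lemma nfa_stepSet_mono {σ : Type} (M : NFA A σ) {S T : Set σ} (h : S ⊆ T) (c : A) :
    M.stepSet S c ⊆ M.stepSet T c := by
  intro s hs
  rw [NFA.mem_stepSet] at *
  obtain ⟨t, ht, h2⟩ := hs
  exact ⟨t, h ht, h2⟩

lemma nfa_evalFrom_mono {σ : Type} (M : NFA A σ) {S T : Set σ} (h : S ⊆ T) (x : List A) :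
    M.evalFrom S x ⊆ M.evalFrom T x := by
  induction x generalizing S T with
  | nil => exact h
  | cons c x ih => exact ih (nfa_stepSet_mono M h c)

/-! #### concatenation -/

def concatNFA {Q1 Q2 : Type} (M1 : DFA A Q1) (M2 : DFA A Q2) : NFA A (Q1 ⊕ Q2) where
  step := fun p c =>
    match p with
    | Sum.inl q => {Sum.inl (M1.step q c)} ∪
        (if M1.step q c ∈ M1.accept then {Sum.inr M2.start} else ∅)
    | Sum.inr r => {Sum.inr (M2.step r c)}
  start := {Sum.inl M1.start} ∪ (if M1.start ∈ M1.accept then {Sum.inr M2.start} else ∅)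
  accept := {p | ∃ r ∈ M2.accept, p = Sum.inr r}

lemma concat_eval {Q1 Q2 : Type} (M1 : DFA A Q1) (M2 : DFA A Q2) (x : List A) :
    ∀ p, p ∈ (concatNFA M1 M2).eval x ↔
      (p = Sum.inl (M1.eval x)) ∨
      (∃ r, p = Sum.inr r ∧ ∃ u v, x = u ++ v ∧ u ∈ M1.accepts ∧ r = M2.eval v) := by
  induction x using List.reverseRecOn with
  | nil =>
    intro p
    show p ∈ ({Sum.inl M1.start} ∪ _ : Set _) ↔ _
    constructor
    · intro hp
      rcases hp with hp | hp
      · exact Or.inl hp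
      · by_cases hacc : M1.start ∈ M1.accept
        · rw [if_pos hacc] at hp
          exact Or.inr ⟨M2.start, hp, [], [], rfl, hacc, rfl⟩
        · rw [if_neg hacc] at hp
          exact absurd hp (Set.notMem_empty p)
    · rintro (rfl | ⟨r, rfl, u, v, huv, hu, rfl⟩)
      · exact Or.inl rfl
      · obtain ⟨hu0, hv0⟩ := List.append_eq_nil_iff.mp huv.symm
        subst hu0; subst hv0
        right
        have hu' : M1.start ∈ M1.accept := hu
        rw [if_pos hu']
        rfl
  | append_singleton x c ih =>
    intro p
    rw [NFA.eval_append_singleton, NFA.mem_stepSet]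
    constructor
    · rintro ⟨s, hs, hp⟩
      rcases (ih s).1 hs with rfl | ⟨r, rfl, u, v, rfl, hu, rfl⟩
      · simp only [concatNFA] at hp
        rcases hp with hp | hp
        · left
          rw [hp, DFA.eval_append_singleton]
        · by_cases hacc : M1.step (M1.eval x) c ∈ M1.accept
          · rw [if_pos hacc] at hp
            refine Or.inr ⟨M2.start, hp, x ++ [c], [], by simp, ?_, rfl⟩
            rw [DFA.mem_accepts, DFA.eval_append_singleton]
            exact hacc
          · rw [if_neg hacc] at hp
            exact absurd hp (Set.notMem_empty p)
      · simp only [concatNFA, Set.mem_singleton_iff] at hp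
        subst hp
        refine Or.inr ⟨_, rfl, u, v ++ [c], by simp [List.append_assoc], hu, ?_⟩
        rw [DFA.eval_append_singleton]
    · rintro (rfl | ⟨r, rfl, u, v, huv, hu, rfl⟩)
      · refine ⟨Sum.inl (M1.eval x), (ih _).2 (Or.inl rfl), ?_⟩
        simp only [concatNFA]
        left
        rw [DFA.eval_append_singleton]
        rfl
      · rcases List.eq_nil_or_concat v with rfl | ⟨v', c', rfl⟩
        · rw [List.append_nil] at huv
          subst huv
          refine ⟨Sum.inl (M1.eval x), (ih _).2 (Or.inl rfl), ?_⟩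
          simp only [concatNFA]
          right
          have hacc : M1.step (M1.eval x) c ∈ M1.accept := by
            rw [DFA.mem_accepts, DFA.eval_append_singleton] at hu
            exact hu
          rw [if_pos hacc]
          rfl
        · rw [List.concat_eq_append, ← List.append_assoc] at huv
          obtain ⟨h1, h2⟩ := List.append_inj' huv rfl
          have hc : c = c' := by simpa using h2
          subst hc
          subst h1
          refine ⟨Sum.inr (M2.eval v'), (ih _).2
            (Or.inr ⟨_, rfl, u, v', rfl, hu, rfl⟩), ?_⟩
          simp only [concatNFA, Set.mem_singleton_iff]
          rw [List.concat_eq_append, DFA.eval_append_singleton]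

lemma concat_accepts {Q1 Q2 : Type} (M1 : DFA A Q1) (M2 : DFA A Q2) :
    (concatNFA M1 M2).accepts = catSet M1.accepts M2.accepts := by
  ext x
  rw [NFA.mem_accepts]
  constructor
  · rintro ⟨S, hS, hmem⟩
    obtain ⟨r, hr, rfl⟩ := hS
    rcases (concat_eval M1 M2 x _).1 hmem with h | ⟨r', heq, u, v, hxuv, hu, hr'⟩
    · exact absurd h (by simp)
    · have h1 : r = r' := Sum.inr.inj heq
      refine ⟨u, v, hu, ?_, hxuv.symm⟩
      show M2.eval v ∈ M2.accept
      rw [← hr', ← h1]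
      exact hr
  · rintro ⟨u, v, hu, hv, rfl⟩
    refine ⟨Sum.inr (M2.eval v), ⟨M2.eval v, ?_, rfl⟩, ?_⟩
    · change M2.eval v ∈ M2.accept at hv
      exact hv
    · exact (concat_eval M1 M2 _ _).2 (Or.inr ⟨_, rfl, u, v, rfl, hu, rfl⟩)

lemma reg_cat {L1 L2 : Set (List A)} (h1 : IsRegularLang L1) (h2 : IsRegularLang L2) :
    IsRegularLang (catSet L1 L2) := by
  obtain ⟨Q1, i1, M1, rfl⟩ := h1
  obtain ⟨Q2, i2, M2, rfl⟩ := h2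
  exact ⟨Set (Q1 ⊕ Q2), inferInstance, (concatNFA M1 M2).toDFA,
    by rw [NFA.toDFA_correct]; exact concat_accepts M1 M2⟩

/-! #### star -/

def starNFA {Q : Type} (M : DFA A Q) : NFA A (Option Q) where
  step := fun p c =>
    match p with
    | none => {some (M.step M.start c)} ∪
        (if M.step M.start c ∈ M.accept then {some M.start} else ∅)
    | some q => {some (M.step q c)} ∪
        (if M.step q c ∈ M.accept then {some M.start} else ∅)
  start := {none}
  accept := {none} ∪ {p | ∃ q ∈ M.accept, p = some q}

lemma star_eval {Q : Type} (M : DFA A Q) (x : List A) :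
    ∀ p, p ∈ (starNFA M).eval x →
      (p = none ∧ x = []) ∨
      (∃ q, p = some q ∧ ∃ (l : List (List A)) (u : List A),
        (∀ w ∈ l, w ∈ M.accepts) ∧ x = l.flatten ++ u ∧ q = M.eval u) := by
  induction x using List.reverseRecOn with
  | nil =>
    intro p hp
    left
    exact ⟨hp, rfl⟩
  | append_singleton x c ih =>
    intro p hp
    rw [NFA.eval_append_singleton, NFA.mem_stepSet] at hp
    obtain ⟨s, hs, hp⟩ := hp
    rcases ih s hs with ⟨rfl, rfl⟩ | ⟨q, rfl, l, u, hl, rfl, rfl⟩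
    · simp only [starNFA] at hp
      rcases hp with hp | hp
      · right
        exact ⟨M.step M.start c, hp, [], [c], by simp, by simp, rfl⟩
      · by_cases hacc : M.step M.start c ∈ M.accept
        · rw [if_pos hacc] at hp
          right
          refine ⟨M.start, hp, [[c]], [], ?_, by simp, rfl⟩
          intro w hw
          simp only [List.mem_singleton] at hw
          subst hw
          rw [DFA.mem_accepts]
          exact hacc
        · rw [if_neg hacc] at hp
          exact absurd hp (Set.notMem_empty p)
    · simp only [starNFA] at hp
      rcases hp with hp | hp
      · right
        refine ⟨_, hp, l, u ++ [c], hl, by simp [List.append_assoc], ?_⟩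
        rw [DFA.eval_append_singleton]
      · by_cases hacc : M.step (M.eval u) c ∈ M.accept
        · rw [if_pos hacc] at hp
          right
          refine ⟨M.start, hp, l ++ [u ++ [c]], [], ?_, by simp [List.append_assoc], rfl⟩
          intro w hw
          rcases List.mem_append.1 hw with h | h
          · exact hl w h
          · simp only [List.mem_singleton] at h
            subst h
            rw [DFA.mem_accepts, DFA.eval_append_singleton]
            exact hacc
        · rw [if_neg hacc] at hp
          exact absurd hp (Set.notMem_empty p)

lemma star_H2 {Q : Type} (M : DFA A Q) : ∀ (u : List A) (q : Q),
    some (M.evalFrom q u) ∈ (starNFA M).evalFrom {some q} u := by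
  intro u
  induction u with
  | nil => intro q; exact rfl
  | cons c u ih =>
    intro q
    show some (M.evalFrom (M.step q c) u) ∈
      (starNFA M).evalFrom ((starNFA M).stepSet {some q} c) u
    refine nfa_evalFrom_mono (starNFA M) ?_ u (ih (M.step q c))
    intro p hp
    rw [Set.mem_singleton_iff] at hp
    subst hp
    rw [NFA.mem_stepSet]
    refine ⟨some q, rfl, ?_⟩
    simp only [starNFA]
    exact Or.inl rfl

lemma star_restart {Q : Type} (M : DFA A Q) {w : List A} (hw : w ∈ M.accepts)
    (hne : w ≠ []) : some M.start ∈ (starNFA M).evalFrom {some M.start} w := by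
  rcases List.eq_nil_or_concat w with rfl | ⟨w', c, rfl⟩
  · exact absurd rfl hne
  · rw [List.concat_eq_append, nfa_evalFrom_append]
    have h1 : some (M.evalFrom M.start w') ∈ (starNFA M).evalFrom {some M.start} w' :=
      star_H2 M w' M.start
    show some M.start ∈ (starNFA M).stepSet _ c
    rw [NFA.mem_stepSet]
    refine ⟨some (M.evalFrom M.start w'), h1, ?_⟩
    have hacc : M.step (M.evalFrom M.start w') c ∈ M.accept := by
      rw [List.concat_eq_append, DFA.mem_accepts, DFA.eval_append_singleton] at hw
      exact hw
    simp only [starNFA]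
    right
    rw [if_pos hacc]
    rfl

lemma star_comp {Q : Type} (M : DFA A Q) : ∀ (l : List (List A)),
    (∀ w ∈ l, w ∈ M.accepts ∧ w ≠ []) →
    some M.start ∈ (starNFA M).evalFrom {some M.start} l.flatten := by
  intro l
  induction l with
  | nil => intro _; exact rfl
  | cons w l ih =>
    intro hl
    rw [List.flatten_cons, nfa_evalFrom_append]
    refine nfa_evalFrom_mono (starNFA M) ?_ l.flatten (ih fun v hv => hl v (by simp [hv]))
    intro p hp
    rw [Set.mem_singleton_iff] at hp
    subst hp
    exact star_restart M (hl w (by simp)).1 (hl w (by simp)).2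

lemma star_none_cons {Q : Type} (M : DFA A Q) (c : A) (u : List A) :
    (starNFA M).evalFrom {none} (c :: u) = (starNFA M).evalFrom {some M.start} (c :: u) := by
  show (starNFA M).evalFrom ((starNFA M).stepSet {none} c) u =
    (starNFA M).evalFrom ((starNFA M).stepSet {some M.start} c) u
  have : (starNFA M).stepSet {none} c = (starNFA M).stepSet {some M.start} c := by
    simp [NFA.stepSet, starNFA]
  rw [this]

lemma filter_ne_nil {P : Set (List A)} : ∀ l : List (List A), (∀ w ∈ l, w ∈ P) →
    ∃ l₂ : List (List A), (∀ w ∈ l₂, w ∈ P ∧ w ≠ []) ∧ l₂.flatten = l.flatten := by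
  intro l
  induction l with
  | nil => exact fun _ => ⟨[], by simp, rfl⟩
  | cons w l ih =>
    intro hl
    obtain ⟨l₂, h1, h2⟩ := ih fun v hv => hl v (by simp [hv])
    by_cases hw : w = []
    · exact ⟨l₂, h1, by simp [hw, h2]⟩
    · refine ⟨w :: l₂, ?_, by simp [h2]⟩
      intro v hv
      rcases List.mem_cons.1 hv with h | h
      · exact h ▸ ⟨hl w (by simp), hw⟩
      · exact h1 v h

lemma star_accepts {Q : Type} (M : DFA A Q) :
    (starNFA M).accepts = starSet M.accepts := by
  ext x
  rw [NFA.mem_accepts]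
  constructor
  · rintro ⟨S, hS, hmem⟩
    rcases star_eval M x S hmem with ⟨rfl, rfl⟩ | ⟨q, rfl, l, u, hl, rfl, rfl⟩
    · exact ⟨[], by simp, rfl⟩
    · rcases hS with hS | ⟨q', hq', he⟩
      · exact absurd hS (by simp)
      · have hqq : M.eval u = q' := by injection he
        refine ⟨l ++ [u], ?_, by simp⟩
        intro v hv
        rcases List.mem_append.1 hv with h | h
        · exact hl v h
        · simp only [List.mem_singleton] at h
          subst h
          change M.eval v ∈ M.accept; rw [hqq]
          exact hq'
  · rintro ⟨l, hl, rfl⟩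
    obtain ⟨l₂, hl₂, hfl⟩ := filter_ne_nil l hl
    rw [← hfl]
    rcases List.eq_nil_or_concat l₂ with rfl | ⟨l₃, w, rfl⟩
    · exact ⟨none, Or.inl rfl, rfl⟩
    · have hw := hl₂ w (by simp)
      have hkey : some (M.evalFrom M.start w) ∈
          (starNFA M).evalFrom {some M.start} (l₃.flatten ++ w) := by
        rw [nfa_evalFrom_append]
        refine nfa_evalFrom_mono (starNFA M) ?_ w (star_H2 M w M.start)
        intro p hp
        rw [Set.mem_singleton_iff] at hp
        subst hp
        exact star_comp M l₃ fun v hv => hl₂ v (by simp [hv])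
      refine ⟨some (M.eval w), Or.inr ⟨M.eval w, ?_, rfl⟩, ?_⟩
      · change M.eval w ∈ M.accept ∧ w ≠ [] at hw
        exact hw.1
      · rw [List.concat_eq_append, List.flatten_append, List.flatten_cons,
          List.flatten_nil, List.append_nil]
        obtain ⟨c, u, hcu⟩ : ∃ c u, l₃.flatten ++ w = c :: u := by
          cases h : l₃.flatten ++ w with
          | nil =>
            exfalso
            exact hw.2 (List.append_eq_nil_iff.1 h).2
          | cons c u => exact ⟨c, u, rfl⟩
        show some (M.eval w) ∈ (starNFA M).evalFrom {none} (l₃.flatten ++ w)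
        rw [hcu, star_none_cons, ← hcu]
        exact hkey

lemma reg_star {L : Set (List A)} (h : IsRegularLang L) : IsRegularLang (starSet L) := by
  obtain ⟨Q, i, M, rfl⟩ := h
  exact ⟨Set (Option Q), inferInstance, (starNFA M).toDFA,
    by rw [NFA.toDFA_correct]; exact star_accepts M⟩


end Automata

end Stmt15

namespace Stmt15

attribute [local instance] Classical.propDecidable

variable {A : Type*}

lemma KS_eq_starSet {X : Set (List A)} : KS X = starSet X := rfl

lemma infix_set_eq (y : List A) :
    {w : List A | y <:+: w} = catSet Set.univ (catSet {y} Set.univ) := by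
  ext w
  constructor
  · rintro ⟨s, t, rfl⟩
    exact ⟨s, y ++ t, Set.mem_univ _, ⟨y, t, rfl, Set.mem_univ _, rfl⟩,
      by simp [List.append_assoc]⟩
  · rintro ⟨u, v, _, ⟨y', t, hy', _, rfl⟩, rfl⟩
    rw [Set.mem_singleton_iff] at hy'
    subst hy'
    exact ⟨u, t, by simp [List.append_assoc]⟩

lemma Ucon_eq {X : Set (List A)} (y : List A) :
    Ucon X y = ({([] : List A)} ∪ ({w | y <:+: w} ∪ KS X))ᶜ := by
  ext u
  simp only [Ucon, Set.mem_setOf_eq, Set.mem_compl_iff, Set.mem_union,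
    Set.mem_singleton_iff, not_or]

lemma build_us {X : Set (List A)} {y : List A} : ∀ l : List (List A),
    (∀ v ∈ l, v ∈ catSet (Ucon X y) {y}) →
    ∃ us : List (List A), (∀ u' ∈ us, u' ∈ Ucon X y) ∧
      (us.map (· ++ y)).flatten = l.flatten := by
  intro l
  induction l with
  | nil => exact fun _ => ⟨[], by simp, rfl⟩
  | cons wv l ih =>
    intro hl
    obtain ⟨us, h1, h2⟩ := ih fun v hv => hl v (by simp [hv])
    obtain ⟨u', y', hu', hy', hwv⟩ := hl wv (by simp)
    rw [Set.mem_singleton_iff] at hy'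
    subst hy'
    refine ⟨u' :: us, ?_, by simp [h2, hwv]⟩
    intro v hv
    rcases List.mem_cons.1 hv with h | h
    · exact h ▸ hu'
    · exact h1 v h

lemma Ys_eq_cat {X : Set (List A)} (y : List A) :
    Ys X y = catSet {y} (starSet (catSet (Ucon X y) {y})) := by
  ext z
  constructor
  · rintro ⟨us, hus, rfl⟩
    refine ⟨y, (us.map (· ++ y)).flatten, rfl, ⟨us.map (· ++ y), ?_, rfl⟩, rfl⟩
    intro v hv
    rw [List.mem_map] at hv
    obtain ⟨u, hu, rfl⟩ := hv
    exact ⟨u, y, hus u hu, rfl, rfl⟩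
  · rintro ⟨u, v, hu, ⟨l, hl, rfl⟩, rfl⟩
    rw [Set.mem_singleton_iff] at hu
    obtain ⟨us, h1, h2⟩ := build_us l hl
    exact ⟨us, h1, by rw [hu, mkY, h2]⟩

lemma reg_Zc {X : Set (List A)} (y : List A) (hreg : IsRegularLang X) :
    IsRegularLang (Zc X y) := by
  have hKS : IsRegularLang (KS X) := by
    rw [KS_eq_starSet]
    exact reg_star hreg
  have hinf : IsRegularLang {w : List A | y <:+: w} := by
    rw [infix_set_eq]
    exact reg_cat reg_univ (reg_cat (reg_single y) reg_univ)
  have hU : IsRegularLang (Ucon X y) := by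
    rw [Ucon_eq]
    exact reg_compl (reg_union (reg_single []) (reg_union hinf hKS))
  have hYs : IsRegularLang (Ys X y) := by
    rw [Ys_eq_cat]
    exact reg_cat (reg_single y) (reg_star (reg_cat hU (reg_single y)))
  exact reg_union hreg hYs

end Stmt15

open Stmt15 in
/-- every regular `F̲_k`-independent code embeds in a complete
(`F̲_k`-independent, regular) code. -/
theorem stmt_15 {A : Type*} [Fintype A] (hA : 2 ≤ Fintype.card A)
    (k : ℕ) (hk : 1 ≤ k) (X : Set (List A))
    (hreg : IsRegularLang X) (hcode : IsCode X)
    (hind : ¬ ∃ x ∈ X, ∃ y ∈ X, x ≠ y ∧ dF x y ≤ k) :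
    ∃ Z : Set (List A), X ⊆ Z ∧ IsCode Z ∧ IsCompleteSet Z ∧
      (¬ ∃ x ∈ Z, ∃ y ∈ Z, x ≠ y ∧ dF x y ≤ k) ∧ IsRegularLang Z := by
  classical
  by_cases hcomp : IsCompleteSet X
  · exact ⟨X, subset_rfl, hcode, hcomp, hind, hreg⟩
  · rw [IsCompleteSet] at hcomp
    push_neg at hcomp
    obtain ⟨w₀, hw₀⟩ := hcomp
    obtain ⟨a, b, hab⟩ := Fintype.exists_pair_of_one_lt_card (α := A) (by omega)
    set N : ℕ := w₀.length + k + 1 with hNdef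
    set y : List A := mark a b w₀ N with hydef
    have hkN : k < N := by omega
    have hwN : w₀.length < N := by omega
    have hN0 : 0 < N := by omega
    have hXw₀ : ∀ w ∈ KS X, ¬ w₀ <:+: w := by
      rintro w ⟨l, hl, rfl⟩ h
      exact (hw₀ l hl) h
    have hyw₀ : w₀ <:+: y := w0_infix_mark
    have hXy : ∀ w ∈ KS X, ¬ y <:+: w := fun w hw h => hXw₀ w hw (hyw₀.trans h)
    have hy : Unbordered y := unbordered_mark hab hwN hN0
    have hyn : y ≠ [] := mark_ne hN0
    have hylen : y.length = 7*N + w₀.length := mark_length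
    have hya : ∀ x, x < 3*N → ∀ h : x < y.length, y[x] = a := fun x h1 h2 =>
      mark_get_a h1 h2
    have hyb : ∀ x, 3*N ≤ x → x < 4*N → ∀ h : x < y.length, y[x] = b := fun x h1 h2 h3 =>
      mark_get_b1 h1 h2 h3
    have hwin : ∃ P Q : List A, y = P ++ w₀ ++ Q ∧ P.length = 4*N :=
      ⟨List.replicate (3*N) a ++ List.replicate N b, List.replicate (3*N) b,
        mark_eq_window, by
          rw [List.length_append, List.length_replicate, List.length_replicate]; omega⟩
    refine ⟨Zc X y, Set.subset_union_left, code_Zc hy hyn hXy hcode,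
      complete_Zc hyn, ?_, reg_Zc y hreg⟩
    rintro ⟨x, hx, y', hy', hne, hd⟩
    rcases hx with hxX | hxY <;> rcases hy' with hyX | hyY
    · exact hind ⟨x, hxX, y', hyX, hne, hd⟩
    · exact ind_XY hkN hN0 hylen hwin hXw₀ hyY hxX (by rw [dF_comm] at hd; exact hd)
    · exact ind_XY hkN hN0 hylen hwin hXw₀ hxY hyX hd
    · exact ind_YY hab hkN hN0 hylen hya hyb hxY hyY hne hd
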